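/- Let R be a commutative ring with identity, M an R-module, and {K_i}_{i ∈ I} a nonempty chain (totally ordered by inclusion) of strongly 2-irreducible submodules of M. Then ⋂_{i ∈ I} K_i is a strongly 2-irreducible submodule of M. -/
import Mathlib

def IsStrongly2Irreducible {R M : Type*} [CommRing R] [AddCommGroup M] [Module R M]
    (N : Submodule R M) : Prop :=
  N ≠ ⊤ ∧ ∀ H₁ H₂ H₃ : Submodule R M, H₁ ⊓ H₂ ⊓ H₃ ≤ N →
    H₁ ⊓ H₂ ≤ N ∨ H₁ ⊓ H₃ ≤ N ∨ H₂ ⊓ H₃ ≤ N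

theorem stmt_15 {R M ι : Type*} [CommRing R] [AddCommGroup M] [Module R M]
    [Nonempty ι] (K : ι → Submodule R M)
    (hchain : ∀ i j, K i ≤ K j ∨ K j ≤ K i)
    (h : ∀ i, IsStrongly2Irreducible (K i)) :
    IsStrongly2Irreducible (⨅ i, K i) := by
  constructor
  · intro htop
    obtain ⟨i⟩ := ‹Nonempty ι›
    exact (h i).1 (top_le_iff.mp (htop ▸ iInf_le K i))
  · intro H₁ H₂ H₃ hH
    by_contra hcon
    push_neg at hcon
    obtain ⟨hc1, hc2, hc3⟩ := hcon
    simp only [le_iInf_iff, not_forall] at hc1 hc2 hc3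
    obtain ⟨i₁, h1⟩ := hc1
    obtain ⟨i₂, h2⟩ := hc2
    obtain ⟨i₃, h3⟩ := hc3
    obtain ⟨k, hk1, hk2, hk3⟩ : ∃ k, K k ≤ K i₁ ∧ K k ≤ K i₂ ∧ K k ≤ K i₃ := by
      rcases hchain i₁ i₂ with h12 | h21
      · rcases hchain i₁ i₃ with h13 | h31
        · exact ⟨i₁, le_refl _, h12, h13⟩
        · exact ⟨i₃, h31, h31.trans h12, le_refl _⟩
      · rcases hchain i₂ i₃ with h23 | h32
        · exact ⟨i₂, h21, le_refl _, h23⟩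
        · exact ⟨i₃, h32.trans h21, h32, le_refl _⟩
    have hle : H₁ ⊓ H₂ ⊓ H₃ ≤ K k := hH.trans (iInf_le K k)
    rcases (h k).2 H₁ H₂ H₃ hle with hd | hd | hd
    · exact h1 (hd.trans hk1)
    · exact h2 (hd.trans hk2)
    · exact h3 (hd.trans hk3)
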